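/- Let T ∈ ℂ^{n×n×n×n} be a nonzero CPS tensor. Consider the convex problem (P'): minimize −⟨T,X⟩ over CPS tensors X with ‖X_{[3,2;1,4]}‖_* ≤ 1, and the rank-constrained problem (Q): minimize −⟨T,X⟩ over CPS tensors X with rank(X_{[3,2;1,4]}) = 1 and ‖X‖_F = 1. Let X̂ be an optimal solution of (P'). Then X̂ is a global minimizer of (Q) if and only if ‖X̂‖_F = 1. -/

import Mathlib

open scoped BigOperators ComplexOrder

/-- A fourth-order complex tensor is conjugate partial-symmetric (CPS). -/
def IsCPS {n : ℕ} (A : Fin n → Fin n → Fin n → Fin n → ℂ) : Prop :=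
  ∀ i j k l, A i j k l = A j i k l ∧ A i j k l = A i j l k ∧
    A i j k l = starRingEnd ℂ (A k l i j)

/-- Inner product of fourth-order complex tensors. -/
noncomputable def tInner {n : ℕ} (A B : Fin n → Fin n → Fin n → Fin n → ℂ) : ℂ :=
  ∑ i, ∑ j, ∑ k, ∑ l, A i j k l * starRingEnd ℂ (B i j k l)

/-- Frobenius norm of a fourth-order complex tensor. -/
noncomputable def tNorm {n : ℕ} (A : Fin n → Fin n → Fin n → Fin n → ℂ) : ℝ :=
  Real.sqrt (∑ i, ∑ j, ∑ k, ∑ l, ‖A i j k l‖ ^ 2)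

/-- The unfolding `T_{[3,2;1,4]}`: the entry in the row indexed by `(k,j)` and
the column indexed by `(i,l)` is `T_{ijkl}`. -/
def unfold3214 {n : ℕ} (T : Fin n → Fin n → Fin n → Fin n → ℂ) :
    Matrix (Fin n × Fin n) (Fin n × Fin n) ℂ :=
  fun p q => T q.1 p.2 p.1 q.2

/-- The nuclear norm of a complex square matrix: the trace of the positive
semidefinite square root of `Xᴴ X`. -/
noncomputable def nuclearNorm {m : Type*} [Fintype m] [DecidableEq m]
    (X : Matrix m m ℂ) : ℝ :=
  ((Matrix.posSemidef_conjTranspose_mul_self X).1.eigenvectorUnitary.1 *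
    Matrix.diagonal (((↑) : ℝ → ℂ) ∘ (√·) ∘ (Matrix.posSemidef_conjTranspose_mul_self X).1.eigenvalues) *
    (star (Matrix.posSemidef_conjTranspose_mul_self X).1.eigenvectorUnitary : Matrix m m ℂ)).trace.re

/-- Trace of a unitary conjugation of a diagonal matrix. -/
lemma trace_unitary_conj_diagonal {m : Type*} [Fintype m] [DecidableEq m]
    (U : Matrix.unitaryGroup m ℂ) (d : m → ℂ) :
    ((U : Matrix m m ℂ) * Matrix.diagonal d * (star U : Matrix m m ℂ)).trace = ∑ i, d i := by
  rw [Matrix.trace_mul_cycle, Unitary.coe_star_mul_self, Matrix.one_mul,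
    Matrix.trace_diagonal]

lemma trace_eq_sum_eigs {m : Type*} [Fintype m] [DecidableEq m] {A : Matrix m m ℂ}
    (hA : A.IsHermitian) : A.trace = ∑ i, (hA.eigenvalues i : ℂ) := by
  conv_lhs => rw [hA.spectral_theorem]
  exact trace_unitary_conj_diagonal _ _

lemma nuclearNorm_eq_sum_sqrt {m : Type*} [Fintype m] [DecidableEq m] (M : Matrix m m ℂ) :
    nuclearNorm M
      = ∑ i, Real.sqrt ((Matrix.posSemidef_conjTranspose_mul_self M).1.eigenvalues i) := by
  unfold nuclearNorm
  rw [trace_unitary_conj_diagonal]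
  simp [Complex.re_sum]

lemma sum_eigs_eq_frobenius {m : Type*} [Fintype m] [DecidableEq m] (M : Matrix m m ℂ) :
    ∑ i, (Matrix.posSemidef_conjTranspose_mul_self M).1.eigenvalues i
      = ∑ p, ∑ q, ‖M p q‖ ^ 2 := by
  have h1 : (Matrix.conjTranspose M * M).trace = ∑ q, ∑ p, (‖M p q‖ ^ 2 : ℂ) := by
    simp only [Matrix.trace, Matrix.diag, Matrix.mul_apply, Matrix.conjTranspose_apply]
    congr 1; ext q; congr 1; ext p
    rw [Complex.star_def, ← Complex.normSq_eq_conj_mul_self]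
    rw [← Complex.sq_norm, Complex.ofReal_pow]
  have h2 := trace_eq_sum_eigs (Matrix.posSemidef_conjTranspose_mul_self M).1
  rw [h1] at h2
  have := congrArg Complex.re h2
  simp only [Complex.re_sum, Complex.ofReal_re] at this
  rw [← this, Finset.sum_comm]
  norm_cast

lemma rank_eq_card_nonzero {m : Type*} [Fintype m] [DecidableEq m] (M : Matrix m m ℂ) :
    M.rank = Fintype.card
      {i // (Matrix.posSemidef_conjTranspose_mul_self M).1.eigenvalues i ≠ 0} := by
  rw [← Matrix.rank_conjTranspose_mul_self,
    (Matrix.posSemidef_conjTranspose_mul_self M).1.rank_eq_card_non_zero_eigs]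

lemma keyA {m : Type*} [Fintype m] (mu : m → ℝ) (hnn : ∀ i, 0 ≤ mu i)
    (h2 : ∑ i, mu i ^ 2 = 1) (h1 : ∑ i, mu i ≤ 1) :
    Fintype.card {i // mu i ≠ 0} = 1 := by
  classical
  have hle1 : ∀ i, mu i ≤ 1 := fun i =>
    le_trans (Finset.single_le_sum (fun j _ => hnn j) (Finset.mem_univ i)) h1
  have hsq_le : ∀ i, mu i ^ 2 ≤ mu i := fun i => by
    nlinarith [hnn i, hle1 i]
  have hsum_eq : ∑ i, mu i = 1 := le_antisymm h1 (h2 ▸ Finset.sum_le_sum fun i _ => hsq_le i)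
  have hzero : ∑ i, (mu i - mu i ^ 2) = 0 := by
    rw [Finset.sum_sub_distrib, hsum_eq, h2, sub_self]
  have h01 : ∀ i, mu i = 0 ∨ mu i = 1 := by
    intro i
    have := (Finset.sum_eq_zero_iff_of_nonneg
      (fun j _ => sub_nonneg.mpr (hsq_le j))).mp hzero i (Finset.mem_univ i)
    have h : mu i * (1 - mu i) = 0 := by nlinarith
    rcases mul_eq_zero.mp h with h' | h'
    · exact Or.inl h'
    · exact Or.inr (by linarith)
  have hcard : ((Finset.univ.filter fun i => mu i ≠ 0).card : ℝ) = 1 := by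
    calc ((Finset.univ.filter fun i => mu i ≠ 0).card : ℝ)
        = ∑ i ∈ Finset.univ.filter fun i => mu i ≠ 0, (1 : ℝ) := by simp
      _ = ∑ i ∈ Finset.univ.filter fun i => mu i ≠ 0, mu i := by
          refine Finset.sum_congr rfl fun i hi => ?_
          rcases h01 i with h | h
          · exact absurd h (Finset.mem_filter.mp hi).2
          · rw [h]
      _ = ∑ i, mu i := Finset.sum_filter_ne_zero _
      _ = 1 := hsum_eq
  rw [Fintype.card_subtype]
  exact_mod_cast hcard

lemma keyB {m : Type*} [Fintype m] (mu : m → ℝ) (hnn : ∀ i, 0 ≤ mu i)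
    (hc : Fintype.card {i // mu i ≠ 0} = 1) (h2 : ∑ i, mu i ^ 2 = 1) :
    ∑ i, mu i = 1 := by
  classical
  obtain ⟨⟨i₀, hi₀⟩, huniq⟩ := Fintype.card_eq_one_iff.mp hc
  have hz : ∀ j, j ≠ i₀ → mu j = 0 := by
    intro j hj
    by_contra h
    exact hj (congrArg Subtype.val (huniq ⟨j, h⟩))
  have h2' : mu i₀ ^ 2 = 1 := by
    rw [← h2, eq_comm]
    exact Finset.sum_eq_single i₀ (fun j _ hj => by rw [hz j hj]; ring) (by simp)
  have : mu i₀ = 1 := by nlinarith [hnn i₀]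
  rw [Finset.sum_eq_single i₀ (fun j _ hj => hz j hj) (by simp), this]

lemma sum4_comm {α : Type*} [AddCommMonoid α] {n : ℕ} (f : Fin n → Fin n → Fin n → Fin n → α) :
    ∑ k, ∑ j, ∑ i, ∑ l, f i j k l = ∑ i, ∑ j, ∑ k, ∑ l, f i j k l :=
  calc ∑ k, ∑ j, ∑ i, ∑ l, f i j k l
      = ∑ j, ∑ k, ∑ i, ∑ l, f i j k l := Finset.sum_comm
    _ = ∑ j, ∑ i, ∑ k, ∑ l, f i j k l := Finset.sum_congr rfl fun j _ => Finset.sum_comm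
    _ = ∑ i, ∑ j, ∑ k, ∑ l, f i j k l := Finset.sum_comm

lemma unfold_frob {n : ℕ} (X : Fin n → Fin n → Fin n → Fin n → ℂ) :
    ∑ p, ∑ q, ‖unfold3214 X p q‖ ^ 2 = ∑ i, ∑ j, ∑ k, ∑ l, ‖X i j k l‖ ^ 2 := by
  simp only [unfold3214, Fintype.sum_prod_type]
  exact sum4_comm fun i j k l => ‖X i j k l‖ ^ 2

/-- For any tensor, its unfolding has eigenvalue-sum (of `MᴴM`) equal to `tNorm` squared,
rank given by nonzero eigenvalue count, etc.  Main helper packaging. -/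
lemma sum_eigs_eq_one {n : ℕ} (X : Fin n → Fin n → Fin n → Fin n → ℂ) (h : tNorm X = 1) :
    ∑ i, (Matrix.posSemidef_conjTranspose_mul_self (unfold3214 X)).1.eigenvalues i = 1 := by
  rw [sum_eigs_eq_frobenius, unfold_frob]
  exact Real.sqrt_eq_one.mp h

/-- An optimal solution of the nuclear-norm constrained convex relaxation is a
global minimizer of the rank-constrained problem if and only if its Frobenius
norm equals one. -/
theorem convex_relaxation_constrained_global_iff {n : ℕ}
    (T : Fin n → Fin n → Fin n → Fin n → ℂ) (hTcps : IsCPS T) (hT0 : T ≠ 0)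
    (Xhat : Fin n → Fin n → Fin n → Fin n → ℂ)
    (hXhatCps : IsCPS Xhat) (hXhatFeas : nuclearNorm (unfold3214 Xhat) ≤ 1)
    (hXhatOpt : ∀ X : Fin n → Fin n → Fin n → Fin n → ℂ, IsCPS X →
      nuclearNorm (unfold3214 X) ≤ 1 →
      -(tInner T Xhat).re ≤ -(tInner T X).re) :
    ((unfold3214 Xhat).rank = 1 ∧ tNorm Xhat = 1 ∧
      (∀ X : Fin n → Fin n → Fin n → Fin n → ℂ, IsCPS X →
        (unfold3214 X).rank = 1 → tNorm X = 1 →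
        -(tInner T Xhat).re ≤ -(tInner T X).re)) ↔
    tNorm Xhat = 1 := by
  constructor
  · exact fun h => h.2.1
  · intro hF
    set lam := (Matrix.posSemidef_conjTranspose_mul_self (unfold3214 Xhat)).1.eigenvalues with hlam
    have hlam_nn : ∀ i, 0 ≤ lam i :=
      (Matrix.posSemidef_conjTranspose_mul_self (unfold3214 Xhat)).eigenvalues_nonneg
    have hlam_sum : ∑ i, lam i = 1 := sum_eigs_eq_one Xhat hF
    have hmu2 : ∑ i, Real.sqrt (lam i) ^ 2 = 1 := by
      rw [← hlam_sum]
      exact Finset.sum_congr rfl fun i _ => Real.sq_sqrt (hlam_nn i)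
    have hmu1 : ∑ i, Real.sqrt (lam i) ≤ 1 := by
      rw [← nuclearNorm_eq_sum_sqrt]
      exact hXhatFeas
    have hcard : Fintype.card {i // Real.sqrt (lam i) ≠ 0} = 1 :=
      keyA _ (fun i => Real.sqrt_nonneg _) hmu2 hmu1
    have hcard' : Fintype.card {i // lam i ≠ 0} = 1 := by
      rw [← hcard]
      exact Fintype.card_congr (Equiv.subtypeEquivRight fun i => by
        rw [not_iff_not, Real.sqrt_eq_zero (hlam_nn i)])
    have hrank : (unfold3214 Xhat).rank = 1 := by
      rw [rank_eq_card_nonzero]; exact hcard'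
    refine ⟨hrank, hF, ?_⟩
    intro X hXcps hXrank hXnorm
    apply hXhatOpt X hXcps
    set lam' := (Matrix.posSemidef_conjTranspose_mul_self (unfold3214 X)).1.eigenvalues with hlam'
    have hlam'_nn : ∀ i, 0 ≤ lam' i :=
      (Matrix.posSemidef_conjTranspose_mul_self (unfold3214 X)).eigenvalues_nonneg
    have hlam'_sum : ∑ i, lam' i = 1 := sum_eigs_eq_one X hXnorm
    have hmu2' : ∑ i, Real.sqrt (lam' i) ^ 2 = 1 := by
      rw [← hlam'_sum]
      exact Finset.sum_congr rfl fun i _ => Real.sq_sqrt (hlam'_nn i)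
    have hcardX : Fintype.card {i // lam' i ≠ 0} = 1 := by
      rw [← rank_eq_card_nonzero]; exact hXrank
    have hcardX' : Fintype.card {i // Real.sqrt (lam' i) ≠ 0} = 1 := by
      rw [← hcardX]
      exact Fintype.card_congr (Equiv.subtypeEquivRight fun i => by
        rw [not_iff_not, Real.sqrt_eq_zero (hlam'_nn i)])
    have : nuclearNorm (unfold3214 X) = 1 := by
      rw [nuclearNorm_eq_sum_sqrt]
      exact keyB _ (fun i => Real.sqrt_nonneg _) hcardX' hmu2'
    exact this.le
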